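/- The SG mechanism is strategy-proof when min_j q_j ≥ max_i r_i: if all agents other than agent 1 bid their true preferences, then for any bid σ_1 of agent 1, agent 1 weakly lexicographic-prefers her truthful-bid allocation a^π_{1*} to her allocation a^σ_{1*} under bid σ_1. -/

import Mathlib

open Finset

/-- Agent lexicographic-prefers share `a` to share `b` w.r.t. preference
permutation `π` (where `π ℓ` is the `ℓ`-th most preferred good): the leftmost
nonzero coordinate of the sorted difference is positive. -/
def LexPref {m : ℕ} (π : Equiv.Perm (Fin m)) (a b : Fin m → ℝ) : Prop :=
  ∃ k : Fin m, (∀ l, l < k → a (π l) = b (π l)) ∧ b (π k) < a (π k)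

/-- A feasible allocation: nonnegative, row sums `r i`, column sums `q j`. -/
def IsAlloc {n m : ℕ} (q : Fin m → ℝ) (r : Fin n → ℝ)
    (a : Fin n → Fin m → ℝ) : Prop :=
  (∀ i j, 0 ≤ a i j) ∧ (∀ i, ∑ j, a i j = r i) ∧ (∀ j, ∑ i, a i j = q j)

/-- Time at which agent `i` starts consuming good `j` under bids `σ`, given the
exhaustion times `T`: the latest exhaustion time among goods `i` bids before `j`. -/
def startTime {n m : ℕ} (σ : Fin n → Equiv.Perm (Fin m)) (T : Fin m → ℝ)
    (i : Fin n) (j : Fin m) : ℝ :=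
  (Finset.univ.filter (fun j' => (σ i).symm j' < (σ i).symm j)).fold max 0 T

/-- The Synchronized Greedy allocation with exhaustion times `T` under bids `σ`:
each agent consumes her most-preferred unexhausted good at constant rate `r i`
from time 0 to time 1, and each good `j` is fully consumed at time `T j`. -/
def IsSGAllocT {n m : ℕ} (q : Fin m → ℝ) (r : Fin n → ℝ)
    (σ : Fin n → Equiv.Perm (Fin m)) (T : Fin m → ℝ)
    (a : Fin n → Fin m → ℝ) : Prop :=
  (∀ j, 0 ≤ T j ∧ T j ≤ 1) ∧
  (∀ i j, a i j = r i * max 0 (T j - startTime σ T i j)) ∧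
  (∀ j, ∑ i, a i j = q j)

/-- `a` is the allocation produced by the SG mechanism under bids `σ`. -/
def IsSGAlloc {n m : ℕ} (q : Fin m → ℝ) (r : Fin n → ℝ)
    (σ : Fin n → Equiv.Perm (Fin m)) (a : Fin n → Fin m → ℝ) : Prop :=
  ∃ T, IsSGAllocT q r σ T a


section FoldMax
variable {α : Type*} [DecidableEq α] (f : α → ℝ)

lemma myfold_nonneg (s : Finset α) : 0 ≤ s.fold max 0 f := by
  induction s using Finset.induction_on with
  | empty => simp
  | insert _ _ hx ih => rw [Finset.fold_insert hx]; exact le_max_of_le_right ih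

lemma myfold_le_of_mem {s : Finset α} {x : α} (hx : x ∈ s) : f x ≤ s.fold max 0 f := by
  induction s using Finset.induction_on with
  | empty => simp at hx
  | @insert a s ha ih =>
    rw [Finset.fold_insert ha]
    rcases Finset.mem_insert.1 hx with h | h
    · subst h; exact le_max_left _ _
    · exact le_max_of_le_right (ih h)

lemma myfold_le {s : Finset α} {c : ℝ} (h0 : 0 ≤ c) (h : ∀ x ∈ s, f x ≤ c) :
    s.fold max 0 f ≤ c := by
  induction s using Finset.induction_on with
  | empty => simpa
  | @insert a s ha ih =>
    rw [Finset.fold_insert ha]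
    exact max_le (h a (mem_insert_self a s)) (ih fun x hx => h x (mem_insert_of_mem hx))

lemma myfold_attain {s : Finset α} (h : 0 < s.fold max 0 f) :
    ∃ x ∈ s, f x = s.fold max 0 f := by
  induction s using Finset.induction_on with
  | empty => simp at h
  | @insert a s ha ih =>
    rw [Finset.fold_insert ha] at h ⊢
    rcases le_total (s.fold max 0 f) (f a) with hle | hle
    · exact ⟨a, mem_insert_self a s, (max_eq_left hle).symm⟩
    · have h' : 0 < s.fold max 0 f := by
        rw [max_eq_right hle] at h; exact h
      obtain ⟨x, hx, hfx⟩ := ih h'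
      exact ⟨x, mem_insert_of_mem hx, by rw [max_eq_right hle]; exact hfx⟩

end FoldMax


noncomputable def mychain {m : ℕ} (ρ : Equiv.Perm (Fin m)) (T : Fin m → ℝ) : ℕ → ℝ
  | 0 => 0
  | l+1 => if h : l < m then max (mychain ρ T l) (T (ρ ⟨l, h⟩)) else mychain ρ T l

variable {m : ℕ} (ρ : Equiv.Perm (Fin m)) (T : Fin m → ℝ)

lemma mychain_le_succ (l : ℕ) : mychain ρ T l ≤ mychain ρ T (l+1) := by
  simp only [mychain]
  split
  · exact le_max_left _ _
  · exact le_refl _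

lemma mychain_mono : Monotone (mychain ρ T) :=
  monotone_nat_of_le_succ (mychain_le_succ ρ T)

lemma mychain_nonneg (l : ℕ) : 0 ≤ mychain ρ T l :=
  (by simp [mychain] : mychain ρ T 0 = 0) ▸ mychain_mono ρ T (Nat.zero_le l)

lemma mychain_le_one (hT1 : ∀ j, T j ≤ 1) (l : ℕ) : mychain ρ T l ≤ 1 := by
  induction l with
  | zero => norm_num [mychain]
  | succ l ih =>
    simp only [mychain]
    split
    · exact max_le ih (hT1 _)
    · exact ih

lemma mychain_succ_of_lt {l : ℕ} (h : l < m) :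
    mychain ρ T (l+1) = max (mychain ρ T l) (T (ρ ⟨l, h⟩)) := by
  simp only [mychain, dif_pos h]

lemma myfilter_fold_eq_chain : ∀ l : ℕ, l ≤ m →
    (univ.filter fun j' : Fin m => ((ρ.symm j' : ℕ) < l)).fold max 0 T = mychain ρ T l := by
  intro l
  induction l with
  | zero => intro _; simp [mychain]
  | succ l ih =>
    intro hl
    have hlm : l < m := hl
    have hset : (univ.filter fun j' : Fin m => ((ρ.symm j' : ℕ) < l+1))
        = insert (ρ ⟨l, hlm⟩) (univ.filter fun j' : Fin m => ((ρ.symm j' : ℕ) < l)) := by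
      ext j'
      simp only [mem_filter, mem_univ, true_and, mem_insert]
      rw [Nat.lt_succ_iff_lt_or_eq]
      constructor
      · rintro (h | h)
        · exact Or.inr h
        · left
          have h2 : ρ.symm j' = ⟨l, hlm⟩ := Fin.ext h
          rw [← h2, Equiv.apply_symm_apply]
      · rintro (h | h)
        · right; rw [h, Equiv.symm_apply_apply]
        · exact Or.inl h
    rw [hset, Finset.fold_insert (by simp), ih (le_of_lt hlm),
      mychain_succ_of_lt ρ T hlm, max_comm]

lemma stP_eq_chain (j : Fin m) :
    (univ.filter fun j' : Fin m => ρ.symm j' < ρ.symm j).fold max 0 T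
      = mychain ρ T (ρ.symm j : ℕ) := by
  rw [← myfilter_fold_eq_chain ρ T (ρ.symm j : ℕ) (le_of_lt (ρ.symm j).isLt)]
  rfl

lemma chain_succ_at (j : Fin m) :
    mychain ρ T ((ρ.symm j : ℕ) + 1)
      = max (mychain ρ T (ρ.symm j : ℕ)) (T j) := by
  rw [mychain_succ_of_lt ρ T (ρ.symm j).isLt]
  congr 1
  rw [show (⟨((ρ.symm j : ℕ)), (ρ.symm j).isLt⟩ : Fin m) = ρ.symm j from Fin.eta _ _,
    Equiv.apply_symm_apply]

lemma W_eq_chain_diff (j : Fin m) :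
    max 0 (T j - mychain ρ T (ρ.symm j : ℕ))
      = mychain ρ T ((ρ.symm j : ℕ) + 1) - mychain ρ T (ρ.symm j : ℕ) := by
  rw [chain_succ_at]
  rcases le_total (T j) (mychain ρ T (ρ.symm j : ℕ)) with h | h
  · rw [max_eq_left (by linarith), max_eq_left h]; ring
  · rw [max_eq_right (by linarith), max_eq_right h]

lemma sum_pos_reindex (g : ℕ → ℝ) :
    ∑ j : Fin m, g ((ρ.symm j : ℕ)) = ∑ l ∈ range m, g l := by
  rw [← Fin.sum_univ_eq_sum_range]
  exact Equiv.sum_comp ρ.symm (fun x : Fin m => g (x : ℕ))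


noncomputable def stP {m : ℕ} (ρ : Equiv.Perm (Fin m)) (T : Fin m → ℝ) (j : Fin m) : ℝ :=
  (Finset.univ.filter (fun j' => ρ.symm j' < ρ.symm j)).fold max 0 T

lemma myfold_nonneg' {α : Type*} [DecidableEq α] (f : α → ℝ) (s : Finset α) : 0 ≤ s.fold max 0 f := by
  induction s using Finset.induction_on with
  | empty => simp
  | insert _ _ hx ih => rw [Finset.fold_insert hx]; exact le_max_of_le_right ih

lemma myfold_le_of_mem' {α : Type*} [DecidableEq α] (f : α → ℝ) {s : Finset α} {x : α} (hx : x ∈ s) :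
    f x ≤ s.fold max 0 f := by
  induction s using Finset.induction_on with
  | empty => simp at hx
  | @insert a s ha ih =>
    rw [Finset.fold_insert ha]
    rcases Finset.mem_insert.1 hx with h | h
    · subst h; exact le_max_left _ _
    · exact le_max_of_le_right (ih h)

lemma myfold_le' {α : Type*} [DecidableEq α] (f : α → ℝ) {s : Finset α} {c : ℝ}
    (h0 : 0 ≤ c) (h : ∀ x ∈ s, f x ≤ c) : s.fold max 0 f ≤ c := by
  induction s using Finset.induction_on with
  | empty => simpa
  | @insert a s ha ih =>
    rw [Finset.fold_insert ha]
    exact max_le (h a (mem_insert_self a s)) (ih fun x hx => h x (mem_insert_of_mem hx))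

lemma myfold_attain' {α : Type*} [DecidableEq α] (f : α → ℝ) {s : Finset α}
    (h : 0 < s.fold max 0 f) : ∃ x ∈ s, f x = s.fold max 0 f := by
  induction s using Finset.induction_on with
  | empty => simp at h
  | @insert a s ha ih =>
    rw [Finset.fold_insert ha] at h ⊢
    rcases le_total (s.fold max 0 f) (f a) with hle | hle
    · exact ⟨a, mem_insert_self a s, (max_eq_left hle).symm⟩
    · have h' : 0 < s.fold max 0 f := by rw [max_eq_right hle] at h; exact h
      obtain ⟨x, hx, hfx⟩ := ih h'
      exact ⟨x, mem_insert_of_mem hx, by rw [max_eq_right hle]; exact hfx⟩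

variable {m : ℕ} (ρ : Equiv.Perm (Fin m)) (T T' : Fin m → ℝ) (j : Fin m) (D : ℝ)

lemma stP_nonneg : 0 ≤ stP ρ T j := myfold_nonneg' _ _

lemma stP_le_of_bound (hD : 0 < D) (hTj : T j = T' j + D)
    (hR' : stP ρ T' j < T' j)
    (hbd : ∀ h, T' h < T' j → T h ≤ T' h + D) :
    stP ρ T j ≤ stP ρ T' j + D := by
  apply myfold_le'
  · have := stP_nonneg ρ T' j; linarith
  · intro x hx
    have hx' : T' x ≤ stP ρ T' j := myfold_le_of_mem' T' hx
    have := hbd x (lt_of_le_of_lt hx' hR')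
    linarith

lemma dom_aux (hD : 0 < D) (hTj : T j = T' j + D)
    (hbd : ∀ h, T' h < T' j → T h ≤ T' h + D) :
    max 0 (T' j - stP ρ T' j) ≤ max 0 (T j - stP ρ T j) := by
  rcases le_or_gt (T' j) (stP ρ T' j) with h | h
  · rw [max_eq_left (by linarith)]
    exact le_max_left _ _
  · have hR := stP_le_of_bound ρ T T' j D hD hTj h hbd
    calc max 0 (T' j - stP ρ T' j) = T' j - stP ρ T' j := max_eq_right (by linarith)
    _ ≤ T j - stP ρ T j := by linarith
    _ ≤ max 0 (T j - stP ρ T j) := le_max_right _ _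

lemma extract_aux (hD : 0 < D) (hTj : T j = T' j + D)
    (hbd : ∀ h, T' h < T' j → T h ≤ T' h + D)
    (heq : max 0 (T j - stP ρ T j) = max 0 (T' j - stP ρ T' j))
    (hpos : 0 < max 0 (T' j - stP ρ T' j)) :
    ∃ h, T' h < T' j ∧ T' h + D ≤ T h := by
  have hR' : stP ρ T' j < T' j := by
    by_contra hc
    push_neg at hc
    rw [max_eq_left (by linarith)] at hpos
    exact lt_irrefl _ hpos
  have hR := stP_le_of_bound ρ T T' j D hD hTj hR' hbd
  have h1 : T' j - stP ρ T' j ≤ T j - stP ρ T j := by linarith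
  have h2 : max 0 (T' j - stP ρ T' j) = T' j - stP ρ T' j := max_eq_right (by linarith)
  have h3 : max 0 (T j - stP ρ T j) = T j - stP ρ T j := max_eq_right (by linarith)
  rw [h2, h3] at heq
  have hReq : stP ρ T j = stP ρ T' j + D := by linarith
  have hRpos : 0 < stP ρ T j := by
    have := stP_nonneg ρ T' j; linarith
  obtain ⟨x, hx, hfx⟩ := myfold_attain' T hRpos
  refine ⟨x, ?_, ?_⟩
  · exact lt_of_le_of_lt (myfold_le_of_mem' T' hx) hR'
  · have hx' : T' x ≤ stP ρ T' j := myfold_le_of_mem' T' hx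
    have hfx' : T x = stP ρ T j := hfx
    rw [hfx', hReq]; linarith

lemma core {n m : ℕ} (q : Fin m → ℝ) (r : Fin n → ℝ)
    (π σ : Fin n → Equiv.Perm (Fin m)) (i₀ : Fin n)
    (hq : ∀ j, 0 < q j) (hr : ∀ i, 0 < r i) (hbig : ∀ i j, r i ≤ q j)
    (hσ : ∀ i, i ≠ i₀ → σ i = π i)
    (T T' : Fin m → ℝ)
    (hT1 : ∀ j, T j ≤ 1) (hT'0 : ∀ j, 0 ≤ T' j)
    (hcolT : ∀ j, ∑ i, r i * max 0 (T j - startTime σ T i j) = q j)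
    (hcolT' : ∀ j, ∑ i, r i * max 0 (T' j - startTime π T' i j) = q j)
    (c : ℝ) (hex : ∃ h, T' h ≤ c ∧ T' h < T h) :
    ∃ js, T' js ≤ c ∧
      max 0 (T js - startTime σ T i₀ js) < max 0 (T' js - startTime π T' i₀ js) := by
  classical
  set del := fun h => T h - T' h with hdel_def
  obtain ⟨h₀, hh₀c, hh₀lt⟩ := hex
  set Sf := univ.filter fun h => T' h ≤ c with hSf_def
  have hh₀Sf : h₀ ∈ Sf := mem_filter.2 ⟨mem_univ _, hh₀c⟩
  have hne : (Sf.image del).Nonempty := ⟨del h₀, mem_image_of_mem del hh₀Sf⟩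
  set D := (Sf.image del).max' hne with hD_def
  have hDle : ∀ h, T' h ≤ c → del h ≤ D :=
    fun h hh => le_max' _ _ (mem_image_of_mem del (mem_filter.2 ⟨mem_univ _, hh⟩))
  have hDpos : 0 < D :=
    lt_of_lt_of_le (by simp only [hdel_def]; linarith) (hDle h₀ hh₀c)
  set A := Sf.filter fun h => del h = D with hA_def
  have hne2 : (A.image T').Nonempty := by
    obtain ⟨x, hxSf, hx⟩ := mem_image.1 ((Sf.image del).max'_mem hne)
    exact ⟨T' x, mem_image_of_mem T' (mem_filter.2 ⟨hxSf, hx⟩)⟩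
  obtain ⟨js, hjsA, hjs'⟩ := mem_image.1 ((A.image T').min'_mem hne2)
  have hjsc : T' js ≤ c := (mem_filter.1 (mem_filter.1 hjsA).1).2
  have hjsD : T js = T' js + D := by
    have h := (mem_filter.1 hjsA).2
    simp only [hdel_def] at h
    linarith
  have hmin : ∀ h ∈ A, T' js ≤ T' h :=
    fun h hh => hjs' ▸ min'_le _ _ (mem_image_of_mem _ hh)
  have hbd : ∀ h, T' h < T' js → T h ≤ T' h + D := by
    intro h hh
    have := hDle h (le_of_lt (lt_of_lt_of_le hh hjsc))
    simp only [hdel_def] at this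
    linarith
  have hdom : ∀ i, i ≠ i₀ →
      max 0 (T' js - startTime π T' i js) ≤ max 0 (T js - startTime σ T i js) := by
    intro i hi
    have hst : startTime σ T i js = stP (π i) T js := by
      show stP (σ i) T js = stP (π i) T js
      rw [hσ i hi]
    have hst' : startTime π T' i js = stP (π i) T' js := rfl
    rw [hst, hst']
    exact dom_aux (π i) T T' js D hDpos hjsD hbd
  have hcol1 := hcolT js
  have hcol2 := hcolT' js
  rw [← Finset.add_sum_erase univ _ (mem_univ i₀)] at hcol1 hcol2
  have hsum_le : ∑ i ∈ univ.erase i₀, r i * max 0 (T' js - startTime π T' i js)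
      ≤ ∑ i ∈ univ.erase i₀, r i * max 0 (T js - startTime σ T i js) :=
    Finset.sum_le_sum fun i hi =>
      mul_le_mul_of_nonneg_left (hdom i (Finset.ne_of_mem_erase hi)) (hr i).le
  have hWle : max 0 (T js - startTime σ T i₀ js) ≤ max 0 (T' js - startTime π T' i₀ js) := by
    have hm : r i₀ * max 0 (T js - startTime σ T i₀ js)
        ≤ r i₀ * max 0 (T' js - startTime π T' i₀ js) := by linarith
    exact le_of_mul_le_mul_left hm (hr i₀)
  refine ⟨js, hjsc, lt_of_le_of_ne hWle ?_⟩
  intro hWeq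
  have hsum_eq : ∑ i ∈ univ.erase i₀, r i * max 0 (T' js - startTime π T' i js)
      = ∑ i ∈ univ.erase i₀, r i * max 0 (T js - startTime σ T i js) := by
    rw [hWeq] at hcol1
    linarith
  have hterm : ∀ i ∈ univ.erase i₀,
      r i * max 0 (T' js - startTime π T' i js) = r i * max 0 (T js - startTime σ T i js) :=
    (Finset.sum_eq_sum_iff_of_le fun i hi =>
      mul_le_mul_of_nonneg_left (hdom i (Finset.ne_of_mem_erase hi)) (hr i).le).1 hsum_eq
  by_cases hP : ∃ i ∈ univ.erase i₀, 0 < max 0 (T' js - startTime π T' i js)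
  · obtain ⟨i, hi, hpos⟩ := hP
    have hieq : max 0 (T js - startTime σ T i js) = max 0 (T' js - startTime π T' i js) := by
      have h := hterm i hi
      have := hr i
      nlinarith
    have hi' : i ≠ i₀ := Finset.ne_of_mem_erase hi
    have hst : startTime σ T i js = stP (π i) T js := by
      show stP (σ i) T js = stP (π i) T js
      rw [hσ i hi']
    have hst' : startTime π T' i js = stP (π i) T' js := rfl
    rw [hst, hst'] at hieq
    rw [hst'] at hpos
    obtain ⟨h, hh1, hh2⟩ := extract_aux (π i) T T' js D hDpos hjsD hbd hieq hpos
    have hhc : T' h ≤ c := le_trans hh1.le hjsc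
    have hdel2 : del h = D := by
      have := hDle h hhc
      simp only [hdel_def] at this ⊢
      linarith
    have := hmin h (mem_filter.2 ⟨mem_filter.2 ⟨mem_univ _, hhc⟩, hdel2⟩)
    linarith
  · push_neg at hP
    have hzero : ∀ i ∈ univ.erase i₀, r i * max 0 (T' js - startTime π T' i js) = 0 := by
      intro i hi
      have h1 := hP i hi
      have h2 : (0:ℝ) ≤ max 0 (T' js - startTime π T' i js) := le_max_left _ _
      have : max 0 (T' js - startTime π T' i js) = 0 := le_antisymm h1 h2
      rw [this, mul_zero]
    rw [Finset.sum_eq_zero hzero, add_zero] at hcol2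
    have hbig' : r i₀ ≤ q js := hbig i₀ js
    have h1le : 1 ≤ max 0 (T' js - startTime π T' i₀ js) := by
      nlinarith [hr i₀]
    have hW'le : max 0 (T' js - startTime π T' i₀ js) ≤ T' js := by
      apply max_le (hT'0 js)
      have : (0:ℝ) ≤ startTime π T' i₀ js := stP_nonneg (π i₀) T' js
      linarith
    have := hT1 js
    linarith


lemma minmax_lemma (Mk a b : ℝ) (hb : b ≤ Mk) :
    min Mk (max a b) - min Mk a = max 0 (b - a) := by
  rcases le_total Mk a with h | h
  · rw [min_eq_left (le_trans h (le_max_left a b)), min_eq_left h,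
      max_eq_left (by linarith)]
    ring
  · rw [min_eq_right h]
    rcases le_total b a with h2 | h2
    · rw [max_eq_left h2, min_eq_right h, max_eq_left (by linarith)]
      ring
    · rw [max_eq_right h2, min_eq_right hb, max_eq_right (by linarith)]

lemma sum_fin_filter_lt {m : ℕ} (K : ℕ) (hK : K ≤ m) (g : ℕ → ℝ) :
    ∑ l ∈ univ.filter (fun l : Fin m => (l : ℕ) < K), g (l : ℕ)
      = ∑ lv ∈ range K, g lv := by
  rw [Finset.sum_filter]
  rw [Fin.sum_univ_eq_sum_range (fun lv => if lv < K then g lv else 0) m]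
  rw [← Finset.sum_filter]
  congr 1
  ext lv
  simp only [mem_filter, mem_range]
  omega

/-- Strategy-proofness of SG when `min_j q_j ≥ max_i r_i`: if all agents other
than `i₀` bid truthfully, then for any bid of agent `i₀`, she weakly
lexicographic-prefers her truthful-bid allocation to her deviating one. -/
theorem sg_strategyproof {n m : ℕ} (q : Fin m → ℝ) (r : Fin n → ℝ)
    (π σ : Fin n → Equiv.Perm (Fin m)) (i₀ : Fin n)
    (hq : ∀ j, 0 < q j) (hr : ∀ i, 0 < r i) (hsum : ∑ i, r i = ∑ j, q j)
    (hbig : ∀ i j, r i ≤ q j)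
    (hσ : ∀ i, i ≠ i₀ → σ i = π i)
    (aπ aσ : Fin n → Fin m → ℝ)
    (hAπ : IsAlloc q r aπ) (hπ : IsSGAlloc q r π aπ)
    (hAσ : IsAlloc q r aσ) (hσa : IsSGAlloc q r σ aσ) :
    aσ i₀ = aπ i₀ ∨ LexPref (π i₀) (aπ i₀) (aσ i₀) := by
  classical
  by_cases heqa : aσ i₀ = aπ i₀
  · exact Or.inl heqa
  right
  obtain ⟨T, hTb, hTa, hTc⟩ := hσa
  obtain ⟨T', hT'b, hT'a, hT'c⟩ := hπ
  have hT1 : ∀ j, T j ≤ 1 := fun j => (hTb j).2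
  have hT0 : ∀ j, 0 ≤ T j := fun j => (hTb j).1
  have hT'1 : ∀ j, T' j ≤ 1 := fun j => (hT'b j).2
  have hT'0 : ∀ j, 0 ≤ T' j := fun j => (hT'b j).1
  have hcolT : ∀ j, ∑ i, r i * max 0 (T j - startTime σ T i j) = q j := by
    intro j
    rw [← hTc j]
    exact Finset.sum_congr rfl fun i _ => (hTa i j).symm
  have hcolT' : ∀ j, ∑ i, r i * max 0 (T' j - startTime π T' i j) = q j := by
    intro j
    rw [← hT'c j]
    exact Finset.sum_congr rfl fun i _ => (hT'a i j).symm
  set ρ := π i₀ with hρ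
  -- first differing position
  have hFne : (univ.filter fun l : Fin m => aσ i₀ (ρ l) ≠ aπ i₀ (ρ l)).Nonempty := by
    by_contra hno
    rw [Finset.not_nonempty_iff_eq_empty, Finset.filter_eq_empty_iff] at hno
    apply heqa
    funext j
    have := hno (mem_univ (ρ.symm j))
    rw [Equiv.apply_symm_apply] at this
    exact not_ne_iff.1 this
  set k := (univ.filter fun l : Fin m => aσ i₀ (ρ l) ≠ aπ i₀ (ρ l)).min' hFne with hk
  have hkF : aσ i₀ (ρ k) ≠ aπ i₀ (ρ k) :=
    (Finset.mem_filter.1 ((univ.filter fun l : Fin m => aσ i₀ (ρ l) ≠ aπ i₀ (ρ l)).min'_mem hFne)).2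
  have hshare : ∀ l : Fin m, l < k → aσ i₀ (ρ l) = aπ i₀ (ρ l) := by
    intro l hl
    by_contra hc
    have hkl : k ≤ l :=
      Finset.min'_le (univ.filter fun l : Fin m => aσ i₀ (ρ l) ≠ aπ i₀ (ρ l)) l
        (Finset.mem_filter.2 ⟨mem_univ _, hc⟩)
    exact absurd hl (not_lt.2 hkl)
  have hshareW : ∀ l : Fin m, l < k →
      max 0 (T (ρ l) - startTime σ T i₀ (ρ l)) = max 0 (T' (ρ l) - startTime π T' i₀ (ρ l)) := by
    intro l hl
    have h := hshare l hl
    rw [hTa, hT'a] at h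
    exact mul_left_cancel₀ (ne_of_gt (hr i₀)) h
  -- chains
  have hstM : ∀ j, startTime π T' i₀ j = mychain ρ T' ((ρ.symm j : ℕ)) :=
    fun j => stP_eq_chain ρ T' j
  set ρσ := σ i₀ with hρσ
  have hstS : ∀ j, startTime σ T i₀ j = mychain ρσ T ((ρσ.symm j : ℕ)) :=
    fun j => stP_eq_chain ρσ T j
  have hMk1 : mychain ρ T' (k : ℕ) ≤ 1 := mychain_le_one ρ T' hT'1 _
  have hMk0 : 0 ≤ mychain ρ T' (k : ℕ) := mychain_nonneg ρ T' _
  -- T' bound on prefix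
  have hT'pre : ∀ l : Fin m, (l : ℕ) < (k : ℕ) → T' (ρ l) ≤ mychain ρ T' (k : ℕ) := by
    intro l hl
    have h1 : T' (ρ l) ≤ mychain ρ T' ((l : ℕ) + 1) := by
      have := chain_succ_at ρ T' (ρ l)
      rw [Equiv.symm_apply_apply] at this
      rw [this]
      exact le_max_right _ _
    exact le_trans h1 (mychain_mono ρ T' (by omega))
  -- LEMMA PRE
  have pre : ∀ h, T' h ≤ mychain ρ T' (k : ℕ) → T h ≤ T' h := by
    intro h hh
    by_contra hcon
    push_neg at hcon
    obtain ⟨js, hjsc, hjslt⟩ := core q r π σ i₀ hq hr hbig hσ T T' hT1 hT'0 hcolT hcolT'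
      (mychain ρ T' (k : ℕ)) ⟨h, hh, hcon⟩
    rcases lt_or_ge ((ρ.symm js : ℕ)) ((k : ℕ)) with hpos | hpos
    · have hl : (ρ.symm js) < k := hpos
      have hs := hshareW (ρ.symm js) hl
      rw [Equiv.apply_symm_apply] at hs
      rw [hs] at hjslt
      exact lt_irrefl _ hjslt
    · have hR' : T' js ≤ startTime π T' i₀ js := by
        rw [hstM js]
        exact le_trans hjsc (mychain_mono ρ T' hpos)
      rw [show max 0 (T' js - startTime π T' i₀ js) = 0 from max_eq_left (by linarith)] at hjslt
      exact absurd hjslt (not_lt.2 (le_max_left _ _))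
  -- prefix σ-death bound
  have hTpre : ∀ l : Fin m, (l : ℕ) < (k : ℕ) → T (ρ l) ≤ mychain ρ T' (k : ℕ) := by
    intro l hl
    exact le_trans (pre (ρ l) (hT'pre l hl)) (hT'pre l hl)
  -- σ-run total chain equals 1
  have hScm : mychain ρσ T m = 1 := by
    have hrow : ∑ j, aσ i₀ j = r i₀ := hAσ.2.1 i₀
    have h1 : ∑ j, max 0 (T j - startTime σ T i₀ j) = 1 := by
      have h2 : ∑ j, r i₀ * max 0 (T j - startTime σ T i₀ j) = ∑ j, aσ i₀ j :=
        Finset.sum_congr rfl fun j _ => (hTa i₀ j).symm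
      rw [hrow, ← Finset.mul_sum] at h2
      exact mul_left_cancel₀ (ne_of_gt (hr i₀)) (h2.trans (mul_one _).symm)
    have h3 : ∑ j, max 0 (T j - startTime σ T i₀ j)
        = ∑ j : Fin m, (mychain ρσ T ((ρσ.symm j : ℕ) + 1) - mychain ρσ T ((ρσ.symm j : ℕ))) := by
      refine Finset.sum_congr rfl fun j _ => ?_
      rw [hstS j]
      exact W_eq_chain_diff ρσ T j
    have h4 : ∑ j : Fin m, (mychain ρσ T ((ρσ.symm j : ℕ) + 1) - mychain ρσ T ((ρσ.symm j : ℕ)))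
        = ∑ lv ∈ range m, (mychain ρσ T (lv + 1) - mychain ρσ T lv) :=
      sum_pos_reindex ρσ (fun lv => mychain ρσ T (lv + 1) - mychain ρσ T lv)
    have h5 : ∑ lv ∈ range m, (mychain ρσ T (lv + 1) - mychain ρσ T lv)
        = mychain ρσ T m - mychain ρσ T 0 := Finset.sum_range_sub (mychain ρσ T) m
    have h6 : mychain ρσ T 0 = 0 := by simp [mychain]
    rw [h3, h4, h5, h6, sub_zero] at h1
    exact h1
  -- TILING
  have til : ∀ j, (k : ℕ) ≤ (ρ.symm j : ℕ) → 0 < max 0 (T j - startTime σ T i₀ j) →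
      mychain ρ T' (k : ℕ) ≤ startTime σ T i₀ j := by
    set Mk := mychain ρ T' (k : ℕ) with hMk_def
    set ψ : Fin m → ℝ := fun j =>
      min Mk (mychain ρσ T ((ρσ.symm j : ℕ) + 1)) - min Mk (mychain ρσ T ((ρσ.symm j : ℕ)))
      with hψ_def
    have htr : ∑ j : Fin m, ψ j = Mk := by
      rw [hψ_def]
      rw [sum_pos_reindex ρσ (fun lv => min Mk (mychain ρσ T (lv + 1)) - min Mk (mychain ρσ T lv))]
      rw [Finset.sum_range_sub (fun lv => min Mk (mychain ρσ T lv)) m]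
      have h0 : mychain ρσ T 0 = 0 := by simp [mychain]
      rw [hScm, h0, min_eq_left hMk1, min_eq_right hMk0, sub_zero]
    have hψnn : ∀ j, 0 ≤ ψ j := by
      intro j
      rw [hψ_def]
      have := mychain_le_succ ρσ T ((ρσ.symm j : ℕ))
      simp only [sub_nonneg]
      exact min_le_min le_rfl this
    have hprefW : ∀ j : Fin m, ((ρ.symm j : ℕ) < (k : ℕ)) →
        ψ j = max 0 (T j - startTime σ T i₀ j) := by
      intro j hPj
      have hb : T j ≤ Mk := by
        have := hTpre (ρ.symm j) hPj
        rwa [Equiv.apply_symm_apply] at this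
      rw [hψ_def]
      simp only
      rw [chain_succ_at ρσ T j, minmax_lemma Mk _ _ hb, hstS j]
    have hpref : ∑ j ∈ univ.filter (fun j : Fin m => (ρ.symm j : ℕ) < (k : ℕ)), ψ j = Mk := by
      rw [Finset.sum_congr rfl (fun j hj => hprefW j (mem_filter.1 hj).2)]
      have hWW' : ∑ j ∈ univ.filter (fun j : Fin m => (ρ.symm j : ℕ) < (k : ℕ)),
          max 0 (T j - startTime σ T i₀ j)
          = ∑ j ∈ univ.filter (fun j : Fin m => (ρ.symm j : ℕ) < (k : ℕ)),
          max 0 (T' j - startTime π T' i₀ j) := by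
        refine Finset.sum_congr rfl fun j hj => ?_
        have hl : (ρ.symm j) < k := (mem_filter.1 hj).2
        have hs := hshareW (ρ.symm j) hl
        rwa [Equiv.apply_symm_apply] at hs
      rw [hWW']
      have hre : ∑ j ∈ univ.filter (fun j : Fin m => (ρ.symm j : ℕ) < (k : ℕ)),
          max 0 (T' j - startTime π T' i₀ j)
          = ∑ l ∈ univ.filter (fun l : Fin m => (l : ℕ) < (k : ℕ)),
            (mychain ρ T' ((l : ℕ) + 1) - mychain ρ T' ((l : ℕ))) := by
        refine Finset.sum_equiv ρ.symm (fun j => ?_) (fun j hj => ?_)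
        · simp only [mem_filter, mem_univ, true_and]
        · rw [hstM j]
          exact W_eq_chain_diff ρ T' j
      rw [hre, sum_fin_filter_lt (k : ℕ) (le_of_lt k.isLt)
          (fun lv => mychain ρ T' (lv + 1) - mychain ρ T' lv),
        Finset.sum_range_sub (mychain ρ T') (k : ℕ)]
      simp [mychain, hMk_def]
    have hrest : ∑ j ∈ univ.filter (fun j : Fin m => ¬ ((ρ.symm j : ℕ) < (k : ℕ))), ψ j = 0 := by
      have := Finset.sum_filter_add_sum_filter_not univ
        (fun j : Fin m => (ρ.symm j : ℕ) < (k : ℕ)) ψ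
      rw [htr] at this
      linarith [hpref, this]
    have hterm0 : ∀ j ∈ univ.filter (fun j : Fin m => ¬ ((ρ.symm j : ℕ) < (k : ℕ))), ψ j = 0 :=
      (Finset.sum_eq_zero_iff_of_nonneg (fun j _ => hψnn j)).1 hrest
    intro j hkj hWpos
    have h0 := hterm0 j (mem_filter.2 ⟨mem_univ _, not_lt.2 hkj⟩)
    rw [hstS j] at hWpos ⊢
    have hTgt : mychain ρσ T ((ρσ.symm j : ℕ)) < T j := by
      by_contra hcc
      push_neg at hcc
      rw [show max 0 (T j - mychain ρσ T ((ρσ.symm j : ℕ))) = 0 from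
        max_eq_left (by linarith)] at hWpos
      exact lt_irrefl _ hWpos
    by_contra hcc
    push_neg at hcc
    rw [hψ_def] at h0
    simp only at h0
    rw [chain_succ_at ρσ T j, max_eq_right hTgt.le,
      min_eq_right hcc.le] at h0
    have h2 : mychain ρσ T ((ρσ.symm j : ℕ)) < min Mk (T j) := lt_min hcc hTgt
    linarith
  have hstMg : startTime π T' i₀ (ρ k) = mychain ρ T' (k : ℕ) := by
    rw [hstM (ρ k), Equiv.symm_apply_apply]
  have hWk : max 0 (T (ρ k) - startTime σ T i₀ (ρ k))
      ≠ max 0 (T' (ρ k) - startTime π T' i₀ (ρ k)) := by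
    intro hWW
    exact hkF (by rw [hTa, hT'a, hWW])
  have main : max 0 (T (ρ k) - startTime σ T i₀ (ρ k))
      < max 0 (T' (ρ k) - startTime π T' i₀ (ρ k)) := by
    by_cases hex : ∃ h, T' h ≤ T' (ρ k) ∧ T' h < T h
    · obtain ⟨js, hjsc, hjslt⟩ := core q r π σ i₀ hq hr hbig hσ T T' hT1 hT'0 hcolT hcolT'
        (T' (ρ k)) hex
      rcases lt_trichotomy ((ρ.symm js : ℕ)) ((k : ℕ)) with hpos | hpos | hpos
      · exfalso
        have hl : (ρ.symm js) < k := hpos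
        have hs := hshareW (ρ.symm js) hl
        rw [Equiv.apply_symm_apply] at hs
        rw [hs] at hjslt
        exact lt_irrefl _ hjslt
      · have hjk : js = ρ k := by
          have h1 : ρ.symm js = k := Fin.ext hpos
          rw [← h1, Equiv.apply_symm_apply]
        rwa [hjk] at hjslt
      · exfalso
        have hR' : T' js ≤ startTime π T' i₀ js := by
          rw [hstM js]
          have h1 : mychain ρ T' ((k : ℕ) + 1) ≤ mychain ρ T' ((ρ.symm js : ℕ)) :=
            mychain_mono ρ T' (by omega)
          have h2 : T' (ρ k) ≤ mychain ρ T' ((k : ℕ) + 1) := by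
            have h3 := chain_succ_at ρ T' (ρ k)
            rw [Equiv.symm_apply_apply] at h3
            rw [h3]
            exact le_max_right _ _
          linarith
        rw [show max 0 (T' js - startTime π T' i₀ js) = 0 from
          max_eq_left (by linarith)] at hjslt
        exact absurd hjslt (not_lt.2 (le_max_left _ _))
    · push_neg at hex
      have hTg : T (ρ k) ≤ T' (ρ k) := hex (ρ k) le_rfl
      rcases le_or_gt (T (ρ k)) (startTime σ T i₀ (ρ k)) with hW0 | hWpos
      · have hz : max 0 (T (ρ k) - startTime σ T i₀ (ρ k)) = 0 :=
          max_eq_left (by linarith)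
        rw [hz]
        rw [hz] at hWk
        exact lt_of_le_of_ne (le_max_left _ _) hWk
      · have hWp : 0 < max 0 (T (ρ k) - startTime σ T i₀ (ρ k)) := by
          rw [max_eq_right (by linarith)]
          linarith
        have hst : mychain ρ T' (k : ℕ) ≤ startTime σ T i₀ (ρ k) := by
          refine til (ρ k) ?_ hWp
          rw [Equiv.symm_apply_apply]
        have hle : max 0 (T (ρ k) - startTime σ T i₀ (ρ k))
            ≤ max 0 (T' (ρ k) - startTime π T' i₀ (ρ k)) := by
          rw [max_eq_right (by linarith : (0:ℝ) ≤ T (ρ k) - startTime σ T i₀ (ρ k))]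
          rw [hstMg]
          calc T (ρ k) - startTime σ T i₀ (ρ k) ≤ T' (ρ k) - mychain ρ T' (k : ℕ) := by linarith
          _ ≤ max 0 (T' (ρ k) - mychain ρ T' (k : ℕ)) := le_max_right _ _
        exact lt_of_le_of_ne hle hWk
  refine ⟨k, fun l hl => (hshare l hl).symm, ?_⟩
  rw [hTa, hT'a]
  exact mul_lt_mul_of_pos_left main (hr i₀)
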